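/- For any real number ε, the vector fields on ℝ³ (descending to the 3-torus when appropriate) R₁ = cos(θ₁+εθ₂)(∂/∂θ₂ - ε ∂/∂θ₁) + sin(θ₁+εθ₂)∂/∂θ₃, R₂ = -sin(θ₁+εθ₂)(∂/∂θ₂ - ε ∂/∂θ₁) + cos(θ₁+εθ₂)∂/∂θ₃, X = ∂/∂θ₁ + ε ∂/∂θ₂ satisfy [R₁,R₂] = 0, [R₂,X] = (1+ε²)R₁, [X,R₁] = (1+ε²)R₂. -/

import Mathlib

/-- Points of `ℝ³` with coordinates `(θ₁,θ₂,θ₃)`. -/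
abbrev T3Pt := Fin 3 → ℝ

/-- The Lie bracket of two vector fields on `ℝ³`. -/
noncomputable def vbr (v w : T3Pt → T3Pt) (p : T3Pt) : T3Pt :=
  fderiv ℝ w p (v p) - fderiv ℝ v p (w p)

/-- The linear form `v ↦ v 0 + ε * v 1`. -/
noncomputable def Lphi (ε : ℝ) : T3Pt →L[ℝ] ℝ :=
  ContinuousLinearMap.proj 0 + ε • ContinuousLinearMap.proj 1

lemma hasFDerivAt_phi (ε : ℝ) (p : T3Pt) :
    HasFDerivAt (fun q : T3Pt => q 0 + ε * q 1) (Lphi ε) p := by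
  have h : (fun q : T3Pt => q 0 + ε * q 1) = ⇑(Lphi ε) := by
    funext v; simp [Lphi]
  rw [h]; exact (Lphi ε).hasFDerivAt

/-- A convenient bundled derivative. -/
noncomputable def Dmap (ε a b c : ℝ) : T3Pt →L[ℝ] T3Pt :=
  ContinuousLinearMap.pi ![a • Lphi ε, b • Lphi ε, c • Lphi ε]

lemma Dmap_apply (ε a b c : ℝ) (v : T3Pt) :
    Dmap ε a b c v =
      ![a * (v 0 + ε * v 1), b * (v 0 + ε * v 1), c * (v 0 + ε * v 1)] := by
  funext i
  fin_cases i <;>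
    simp [Dmap, Lphi, ContinuousLinearMap.pi_apply, smul_eq_mul] <;> ring

lemma hasFDerivAt_R1 (ε : ℝ) (p : T3Pt) :
    HasFDerivAt (fun q : T3Pt => ![-ε * Real.cos (q 0 + ε * q 1),
        Real.cos (q 0 + ε * q 1), Real.sin (q 0 + ε * q 1)])
      (Dmap ε (ε * Real.sin (p 0 + ε * p 1)) (-Real.sin (p 0 + ε * p 1))
        (Real.cos (p 0 + ε * p 1))) p := by
  apply hasFDerivAt_pi''
  intro i
  have hcos := (Real.hasDerivAt_cos (p 0 + ε * p 1)).comp_hasFDerivAt p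
    (hasFDerivAt_phi ε p)
  have hsin := (Real.hasDerivAt_sin (p 0 + ε * p 1)).comp_hasFDerivAt p
    (hasFDerivAt_phi ε p)
  fin_cases i <;> simp [Dmap, ContinuousLinearMap.proj_pi]
  · have h := hcos.const_mul (-ε)
    rw [smul_smul] at h
    rw [show ε * Real.sin (p 0 + ε * p 1) = -ε * -Real.sin (p 0 + ε * p 1) by
      ring]
    simpa [Function.comp, neg_mul] using h
  · exact hcos
  · exact hsin

lemma hasFDerivAt_R2 (ε : ℝ) (p : T3Pt) :
    HasFDerivAt (fun q : T3Pt => ![ε * Real.sin (q 0 + ε * q 1),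
        -Real.sin (q 0 + ε * q 1), Real.cos (q 0 + ε * q 1)])
      (Dmap ε (ε * Real.cos (p 0 + ε * p 1)) (-Real.cos (p 0 + ε * p 1))
        (-Real.sin (p 0 + ε * p 1))) p := by
  apply hasFDerivAt_pi''
  intro i
  have hcos := (Real.hasDerivAt_cos (p 0 + ε * p 1)).comp_hasFDerivAt p
    (hasFDerivAt_phi ε p)
  have hsin := (Real.hasDerivAt_sin (p 0 + ε * p 1)).comp_hasFDerivAt p
    (hasFDerivAt_phi ε p)
  fin_cases i <;> simp [Dmap, ContinuousLinearMap.proj_pi]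
  · have h := hsin.const_mul ε
    rw [smul_smul] at h
    exact h
  · convert hsin.neg using 1
    · rfl
    exact neg_smul _ _
  · exact hcos

/-- for any `ε ∈ ℝ`, the fields
`R₁ = cos(θ₁+εθ₂)(∂/∂θ₂ - ε∂/∂θ₁) + sin(θ₁+εθ₂)∂/∂θ₃`,
`R₂ = -sin(θ₁+εθ₂)(∂/∂θ₂ - ε∂/∂θ₁) + cos(θ₁+εθ₂)∂/∂θ₃`,
`X = ∂/∂θ₁ + ε∂/∂θ₂` satisfy `[R₁,R₂] = 0`, `[R₂,X] = (1+ε²)R₁`,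
`[X,R₁] = (1+ε²)R₂`. -/
theorem skew_torus_frame (ε : ℝ) (R₁ R₂ X : T3Pt → T3Pt)
    (hR₁ : R₁ = fun p => ![-ε * Real.cos (p 0 + ε * p 1),
        Real.cos (p 0 + ε * p 1), Real.sin (p 0 + ε * p 1)])
    (hR₂ : R₂ = fun p => ![ε * Real.sin (p 0 + ε * p 1),
        -Real.sin (p 0 + ε * p 1), Real.cos (p 0 + ε * p 1)])
    (hX : X = fun _ => ![1, ε, 0]) :
    (∀ p : T3Pt, vbr R₁ R₂ p = 0) ∧
    (∀ p : T3Pt, vbr R₂ X p = (1 + ε ^ 2) • R₁ p) ∧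
    (∀ p : T3Pt, vbr X R₁ p = (1 + ε ^ 2) • R₂ p) := by
  subst hR₁ hR₂ hX
  have hfX : ∀ p : T3Pt, fderiv ℝ (fun _ : T3Pt => ![(1:ℝ), ε, 0]) p = 0 :=
    fun p => fderiv_const_apply _
  refine ⟨fun p => ?_, fun p => ?_, fun p => ?_⟩ <;> unfold vbr
  · rw [(hasFDerivAt_R1 ε p).fderiv, (hasFDerivAt_R2 ε p).fderiv,
      Dmap_apply, Dmap_apply]
    funext i
    fin_cases i <;> simp
  · rw [(hasFDerivAt_R2 ε p).fderiv, hfX, Dmap_apply]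
    funext i
    fin_cases i <;> simp <;> ring
  · rw [(hasFDerivAt_R1 ε p).fderiv, hfX, Dmap_apply]
    funext i
    fin_cases i <;> simp <;> ring
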